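/- Let f : ℝⁿ → ℝ be differentiable, g : ℝⁿ → ℝ convex, α > 0, μ > 0, and suppose F = f + g attains global minimum F* and satisfies the proximal PL condition (1/2)D_g(x, α) ≥ μ(F(x) - F*) for all x. Then any differentiable solution x(·) of ẋ = -x + prox_{αg}(x - α∇f(x)) satisfies F(x(t)) - F* ≤ e^{-μαt}(F(x(0)) - F*). -/

import Mathlib

open scoped RealInnerProductSpace
open Set Filter Topology

/-- `D_g(x, α)` from the proximal PL condition of Karimi–Nutini–Schmidt. -/
noncomputable def Dg {n : ℕ} (f g : EuclideanSpace ℝ (Fin n) → ℝ)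
    (f' : EuclideanSpace ℝ (Fin n) → EuclideanSpace ℝ (Fin n))
    (x : EuclideanSpace ℝ (Fin n)) (β : ℝ) : ℝ :=
  (2 / β) * sSup {r : ℝ | ∃ y,
    r = ⟪f' x, x - y⟫ - ‖x - y‖ ^ 2 / (2 * β) + g x - g y}

lemma prox_key {n : ℕ}
    (f g : EuclideanSpace ℝ (Fin n) → ℝ)
    (f' prox : EuclideanSpace ℝ (Fin n) → EuclideanSpace ℝ (Fin n))
    (α μ : ℝ) (hα : 0 < α) (Fstar : ℝ)
    (hPL : ∀ y, (1 / 2) * Dg f g f' y α ≥ μ * (f y + g y - Fstar))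
    (hprox : ∀ y u, α * g (prox y) + ‖prox y - (y - α • f' y)‖ ^ 2 / 2 ≤
                    α * g u + ‖u - (y - α • f' y)‖ ^ 2 / 2)
    (y : EuclideanSpace ℝ (Fin n)) :
    ⟪f' y, prox y - y⟫ + g (prox y) - g y ≤ -(μ * α) * (f y + g y - Fstar) := by
  unfold Dg at hPL
  set p := prox y with hp
  have expand : ∀ u : EuclideanSpace ℝ (Fin n),
      ‖u - (y - α • f' y)‖ ^ 2 = ‖u - y‖ ^ 2 + 2 * (α * ⟪f' y, u - y⟫) + ‖α • f' y‖ ^ 2 := by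
    intro u
    have h1 : u - (y - α • f' y) = (u - y) + α • f' y := by abel
    rw [h1, norm_add_sq_real, real_inner_smul_right, real_inner_comm]
  have hmono : ∀ u, α * g p + α * ⟪f' y, p - y⟫ + ‖p - y‖ ^ 2 / 2 ≤
      α * g u + α * ⟪f' y, u - y⟫ + ‖u - y‖ ^ 2 / 2 := by
    intro u
    have h := hprox y u
    rw [expand p, expand u] at h
    linarith
  obtain ⟨φ, hφ⟩ : ∃ φ : EuclideanSpace ℝ (Fin n) → ℝ,
      φ = fun u => ⟪f' y, y - u⟫ - ‖y - u‖ ^ 2 / (2 * α) + g y - g u := ⟨_, rfl⟩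
  have hφeq : ∀ u, φ u = g y - g u - ⟪f' y, u - y⟫ - ‖u - y‖ ^ 2 / (2 * α) := by
    intro u
    have h1 : y - u = -(u - y) := by abel
    simp only [hφ, h1, inner_neg_right, norm_neg]
    ring
  have hφle : ∀ u, φ u ≤ φ p := by
    intro u
    rw [hφeq u, hφeq p]
    have h := hmono u
    have h2 : ‖p - y‖ ^ 2 / (2 * α) * α = ‖p - y‖ ^ 2 / 2 := by field_simp
    have h3 : ‖u - y‖ ^ 2 / (2 * α) * α = ‖u - y‖ ^ 2 / 2 := by field_simp
    nlinarith [mul_pos hα hα]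
  have hφy : φ y = 0 := by rw [hφ]; simp
  have hsup : sSup {r : ℝ | ∃ u, r = φ u} ≤ φ p := by
    refine csSup_le ⟨φ y, ⟨y, rfl⟩⟩ ?_
    rintro r ⟨u, rfl⟩
    exact hφle u
  have h2α : (0:ℝ) < 2 / α := by positivity
  have key : μ * (f y + g y - Fstar) ≤ (1/2) * ((2/α) * φ p) := by
    calc μ * (f y + g y - Fstar)
        ≤ (1/2) * ((2/α) * sSup {r : ℝ | ∃ u, r = φ u}) := by rw [hφ]; exact hPL y
    _ ≤ (1/2) * ((2/α) * φ p) := by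
        have := mul_le_mul_of_nonneg_left hsup (le_of_lt h2α)
        linarith
  have key2 : μ * α * (f y + g y - Fstar) ≤ φ p := by
    have h4 : (1/2) * ((2/α) * φ p) = φ p / α := by field_simp
    rw [h4] at key
    calc μ * α * (f y + g y - Fstar) = (μ * (f y + g y - Fstar)) * α := by ring
    _ ≤ (φ p / α) * α := mul_le_mul_of_nonneg_right key (le_of_lt hα)
    _ = φ p := by field_simp
  have heq := hφeq p
  have hnn : 0 ≤ ‖p - y‖ ^ 2 / (2 * α) := by positivity
  have s1 : (⟪f' y, p - y⟫ : ℝ) + g p - g y ≤ -(φ p) := by linarith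
  have s2 : -(φ p) ≤ -(μ * α * (f y + g y - Fstar)) := by linarith
  calc (⟪f' y, p - y⟫ : ℝ) + g p - g y ≤ -(μ * α * (f y + g y - Fstar)) := le_trans s1 s2
  _ = -(μ * α) * (f y + g y - Fstar) := by ring

/-- Theorem 8: the proximal PL condition implies global exponential convergence
of the cost with rate `μα` along the proximal gradient dynamics. -/
theorem cost_exp_convergence_prox_PL {n : ℕ}
    (f g : EuclideanSpace ℝ (Fin n) → ℝ)
    (f' prox : EuclideanSpace ℝ (Fin n) → EuclideanSpace ℝ (Fin n))
    (hf : ∀ y, HasGradientAt f (f' y) y)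
    (hg : ConvexOn ℝ Set.univ g) (α μ : ℝ) (hα : 0 < α) (hμ : 0 < μ)
    (Fstar : ℝ)
    (hmin : ∀ y, Fstar ≤ f y + g y)
    (hattained : ∃ xstar, f xstar + g xstar = Fstar)
    (hPL : ∀ y, (1 / 2) * Dg f g f' y α ≥ μ * (f y + g y - Fstar))
    (hprox : ∀ y u, α * g (prox y) + ‖prox y - (y - α • f' y)‖ ^ 2 / 2 ≤
                    α * g u + ‖u - (y - α • f' y)‖ ^ 2 / 2)
    (x : ℝ → EuclideanSpace ℝ (Fin n))
    (hx : ∀ t, 0 ≤ t → HasDerivAt x (-x t + prox (x t)) t) :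
    ∀ t, 0 ≤ t →
      f (x t) + g (x t) - Fstar ≤
        Real.exp (-(μ * α) * t) * (f (x 0) + g (x 0) - Fstar) := by
  have keyA := prox_key f g f' prox α μ hα Fstar hPL hprox
  have hgl : LocallyLipschitz g := hg.locallyLipschitz
  intro T hT
  -- continuity of the Lyapunov function
  have contV : ContinuousOn (fun s => f (x s) + g (x s) - Fstar) (Icc 0 T) := by
    intro s hs
    have hxs : ContinuousAt x s := (hx s hs.1).continuousAt
    exact ((((hf (x s)).differentiableAt.continuousAt.comp hxs).add
      (hgl.continuous.continuousAt.comp hxs)).sub continuousAt_const).continuousWithinAt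
  -- slope condition
  have hslope : ∀ t ∈ Ico (0:ℝ) T, ∀ r,
      -(μ * α) * (f (x t) + g (x t) - Fstar) < r →
      ∃ᶠ z in 𝓝[>] t, (z - t)⁻¹ *
        ((f (x z) + g (x z) - Fstar) - (f (x t) + g (x t) - Fstar)) < r := by
    intro t ht r hr
    have ht0 : (0:ℝ) ≤ t := ht.1
    obtain ⟨v, hv⟩ : ∃ v, v = -x t + prox (x t) := ⟨_, rfl⟩
    have hxt : HasDerivAt x v t := by rw [hv]; exact hx t ht0
    have hveq : v = prox (x t) - x t := by rw [hv]; abel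
    have hpv : x t + v = prox (x t) := by rw [hv]; abel
    obtain ⟨K, U, hU, hK⟩ := hgl (x t)
    have hK0 : (0:ℝ) ≤ (K : ℝ) := K.2
    have hc : (⟪f' (x t), v⟫ : ℝ) + g (prox (x t)) - g (x t)
        ≤ -(μ * α) * (f (x t) + g (x t) - Fstar) := by
      rw [hveq]; exact keyA (x t)
    obtain ⟨c, hcdef⟩ : ∃ c : ℝ, c = ⟪f' (x t), v⟫ + g (prox (x t)) - g (x t) := ⟨_, rfl⟩
    have hcr : c < r := by rw [hcdef]; exact lt_of_le_of_lt hc hr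
    obtain ⟨ε, hε⟩ : ∃ ε : ℝ, ε = (r - c) / (K + 2) := ⟨_, rfl⟩
    have hεpos : 0 < ε := by
      rw [hε]; apply div_pos (by linarith) (by positivity)
    -- f-part
    have hfd : HasDerivAt (fun s => f (x s)) (⟪f' (x t), v⟫) t := by
      have h1 := (hf (x t)).hasFDerivAt.comp_hasDerivAt t hxt
      simp at h1
      exact h1
    have hslopef : ∀ᶠ z in 𝓝[>] t,
        (z - t)⁻¹ * (f (x z) - f (x t)) < ⟪f' (x t), v⟫ + ε := by
      have h2 := hasDerivAt_iff_tendsto_slope.mp hfd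
      have h3 : ∀ᶠ z in 𝓝[≠] t, slope (fun s => f (x s)) t z < ⟪f' (x t), v⟫ + ε :=
        h2.eventually (gt_mem_nhds (lt_add_of_pos_right _ hεpos))
      have h4 := h3.filter_mono (nhdsWithin_mono t (fun z hz => ne_of_gt hz))
      refine h4.mono fun z hz => ?_
      rwa [slope_def_field, div_eq_inv_mul] at hz
    -- little-o
    have ho := hasDerivAt_iff_isLittleO.mp hxt
    have ho1 : ∀ᶠ z in 𝓝 t, ‖x z - x t - (z - t) • v‖ ≤ ε * ‖z - t‖ := ho.def hεpos
    have hU1 : ∀ᶠ z in 𝓝 t, x z ∈ U := hxt.continuousAt.eventually_mem hU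
    have hU2 : ∀ᶠ z in 𝓝 t, x t + (z - t) • v ∈ U := by
      have hcont : ContinuousAt (fun z : ℝ => x t + (z - t) • v) t := by fun_prop
      exact hcont.eventually_mem (by simpa using hU)
    have hsmall : ∀ᶠ z in 𝓝 t, z - t ≤ 1 := by
      have h5 := Ioo_mem_nhds (show t - 1 < t by linarith) (show t < t + 1 by linarith)
      filter_upwards [h5] with z hz
      linarith [hz.2]
    have hall : ∀ᶠ z in 𝓝[>] t,
        (z - t)⁻¹ * ((f (x z) + g (x z) - Fstar) - (f (x t) + g (x t) - Fstar)) < r := by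
      filter_upwards [hslopef, (ho1.and (hU1.and (hU2.and hsmall))).filter_mono
        nhdsWithin_le_nhds, self_mem_nhdsWithin] with z hz1 hz2 hz3
      obtain ⟨hoz, hzU, hzU2, hz1'⟩ := hz2
      have hh : 0 < z - t := sub_pos.mpr hz3
      -- g part
      have hgLip : |g (x z) - g (x t + (z - t) • v)| ≤ K * ‖x z - (x t + (z - t) • v)‖ := by
        have := hK.dist_le_mul (x z) hzU (x t + (z - t) • v) hzU2
        rwa [Real.dist_eq, dist_eq_norm] at this
      have hnorm : ‖x z - (x t + (z - t) • v)‖ ≤ ε * (z - t) := by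
        have h6 : x z - (x t + (z - t) • v) = x z - x t - (z - t) • v := by abel
        rw [h6]
        calc ‖x z - x t - (z - t) • v‖ ≤ ε * ‖z - t‖ := hoz
        _ = ε * (z - t) := by rw [Real.norm_eq_abs, abs_of_pos hh]
      have hconv : g (x t + (z - t) • v) ≤
          (1 - (z - t)) * g (x t) + (z - t) * g (x t + v) := by
        have h7 := hg.2 (mem_univ (x t)) (mem_univ (x t + v))
          (by linarith : (0:ℝ) ≤ 1 - (z - t)) (le_of_lt hh) (by ring)
        have h8 : (1 - (z - t)) • x t + (z - t) • (x t + v) = x t + (z - t) • v := by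
          module
        rwa [h8] at h7
      have hg1 : g (x z) - g (x t) ≤
          (z - t) * (g (x t + v) - g (x t)) + K * (ε * (z - t)) := by
        have h9 : g (x z) - g (x t + (z - t) • v) ≤ K * (ε * (z - t)) := by
          calc g (x z) - g (x t + (z - t) • v) ≤ |g (x z) - g (x t + (z - t) • v)| := le_abs_self _
          _ ≤ K * ‖x z - (x t + (z - t) • v)‖ := hgLip
          _ ≤ K * (ε * (z - t)) := by
              exact mul_le_mul_of_nonneg_left hnorm hK0
        nlinarith [hconv]
      have hg2 : (z - t)⁻¹ * (g (x z) - g (x t)) ≤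
          (g (x t + v) - g (x t)) + K * ε := by
        rw [inv_mul_le_iff₀ hh]
        nlinarith [hg1]
      have hfin : (z - t)⁻¹ * ((f (x z) + g (x z) - Fstar) - (f (x t) + g (x t) - Fstar))
          = (z - t)⁻¹ * (f (x z) - f (x t)) + (z - t)⁻¹ * (g (x z) - g (x t)) := by ring
      rw [hfin]
      have hcsum : (⟪f' (x t), v⟫ : ℝ) + ε + ((g (x t + v) - g (x t)) + K * ε) < r := by
        rw [hpv]
        have hεe : ε * ((K : ℝ) + 2) = r - c := by
          rw [hε]; field_simp
        rw [hcdef] at hεe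
        linarith [hεpos, hεe]
      calc (z - t)⁻¹ * (f (x z) - f (x t)) + (z - t)⁻¹ * (g (x z) - g (x t))
          < (⟪f' (x t), v⟫ + ε) + ((g (x t + v) - g (x t)) + K * ε) :=
            add_lt_add_of_lt_of_le hz1 hg2
      _ < r := by linarith [hcsum]
    exact hall.frequently
  -- Gronwall
  have hb := le_gronwallBound_of_liminf_deriv_right_le
    (f := fun s => f (x s) + g (x s) - Fstar)
    (f' := fun s => -(μ * α) * (f (x s) + g (x s) - Fstar))
    (δ := f (x 0) + g (x 0) - Fstar) (K := -(μ * α)) (ε := 0) (a := 0) (b := T)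
    contV (fun s hs r hr => hslope s hs r hr) le_rfl
    (fun s _ => by simp) T ⟨hT, le_rfl⟩
  rw [gronwallBound_ε0, sub_zero] at hb
  calc f (x T) + g (x T) - Fstar
      ≤ (f (x 0) + g (x 0) - Fstar) * Real.exp (-(μ * α) * T) := hb
  _ = Real.exp (-(μ * α) * T) * (f (x 0) + g (x 0) - Fstar) := by ring
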